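/- There exists an optimal dual solution p* of the minimum-cost flow problem satisfying 0 ≤ p*_i ≤ (n−1)·C for all nodes i, where C = max_{(i,j)∈E} |a_{ij}| and n is the number of nodes. -/

import Mathlib

open Finset

section MCF

variable {n : ℕ} (E : Finset (Fin n × Fin n)) (a b c : Fin n × Fin n → ℝ) (s : Fin n → ℝ)

private noncomputable def objF (p : Fin n → ℝ) : ℝ :=
  (∑ e ∈ E, if 0 ≤ a e - (p e.1 - p e.2)
      then (a e - (p e.1 - p e.2)) * b e
      else (a e - (p e.1 - p e.2)) * c e) + ∑ i, s i * p i

private lemma iteNonposMCF {x u v : ℝ} (hx : x ≤ 0) :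
    (if 0 ≤ x then x * u else x * v) = x * v := by
  split_ifs with h
  · have hx0 : x = 0 := le_antisymm hx h
    simp [hx0]
  · rfl

private lemma shift_eq (C : ℝ) (hC : ∀ e ∈ E, |a e| ≤ C)
    (p : Fin n → ℝ) (S : Finset (Fin n)) (Δ : ℝ) (hΔ : 0 ≤ Δ)
    (hcross1 : ∀ e ∈ E, e.1 ∈ S → e.2 ∉ S → C + Δ ≤ p e.1 - p e.2)
    (hcross2 : ∀ e ∈ E, e.1 ∉ S → e.2 ∈ S → C + Δ ≤ p e.2 - p e.1) :
    ∃ K : ℝ, ∀ δ : ℝ, |δ| ≤ Δ →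
      objF E a b c s (fun i => if i ∈ S then p i - δ else p i)
        = objF E a b c s p + δ * K := by
  classical
  refine ⟨(∑ e ∈ E, (if e.1 ∈ S ∧ e.2 ∉ S then c e
      else if e.1 ∉ S ∧ e.2 ∈ S then -(b e) else 0)) - ∑ i ∈ S, s i, ?_⟩
  intro δ hδ
  obtain ⟨hδ2, hδ1⟩ := abs_le.mp hδ
  simp only [objF]
  have hedge : ∀ e ∈ E,
      (if 0 ≤ a e - ((if e.1 ∈ S then p e.1 - δ else p e.1)
          - (if e.2 ∈ S then p e.2 - δ else p e.2))
        then (a e - ((if e.1 ∈ S then p e.1 - δ else p e.1)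
          - (if e.2 ∈ S then p e.2 - δ else p e.2))) * b e
        else (a e - ((if e.1 ∈ S then p e.1 - δ else p e.1)
          - (if e.2 ∈ S then p e.2 - δ else p e.2))) * c e)
      = (if 0 ≤ a e - (p e.1 - p e.2) then (a e - (p e.1 - p e.2)) * b e
          else (a e - (p e.1 - p e.2)) * c e)
        + δ * (if e.1 ∈ S ∧ e.2 ∉ S then c e
            else if e.1 ∉ S ∧ e.2 ∈ S then -(b e) else 0) := by
    intro e he
    obtain ⟨ha1, ha2⟩ := abs_le.mp (hC e he)
    by_cases h1 : e.1 ∈ S <;> by_cases h2 : e.2 ∈ S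
    · simp only [if_pos h1, if_pos h2]
      have hd : p e.1 - δ - (p e.2 - δ) = p e.1 - p e.2 := by ring
      rw [hd]
      simp [h1, h2]
    · have hd := hcross1 e he h1 h2
      simp only [if_pos h1, if_neg h2]
      rw [iteNonposMCF (show a e - (p e.1 - δ - p e.2) ≤ 0 by linarith),
        iteNonposMCF (show a e - (p e.1 - p e.2) ≤ 0 by linarith)]
      simp only [h1, h2, not_false_iff, and_self, if_pos, and_true, true_and]
      ring
    · have hd := hcross2 e he h1 h2
      simp only [if_neg h1, if_pos h2]
      rw [if_pos (by linarith : (0:ℝ) ≤ a e - (p e.1 - (p e.2 - δ))),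
        if_pos (by linarith : (0:ℝ) ≤ a e - (p e.1 - p e.2))]
      have : ¬ (e.1 ∈ S ∧ e.2 ∉ S) := by tauto
      rw [if_neg this, if_pos ⟨h1, h2⟩]
      ring
    · simp only [if_neg h1, if_neg h2]
      have : ¬ (e.1 ∈ S ∧ e.2 ∉ S) := by tauto
      rw [if_neg this]
      have : ¬ (e.1 ∉ S ∧ e.2 ∈ S) := by tauto
      rw [if_neg this]
      ring
  rw [Finset.sum_congr rfl hedge, Finset.sum_add_distrib, ← Finset.mul_sum]
  have hs : (∑ i, s i * (if i ∈ S then p i - δ else p i))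
      = (∑ i, s i * p i) - δ * ∑ i ∈ S, s i := by
    have h1 : ∀ i ∈ (univ : Finset (Fin n)), s i * (if i ∈ S then p i - δ else p i)
        = s i * p i - (if i ∈ S then δ * s i else 0) := by
      intro i _
      split_ifs with h <;> ring
    rw [Finset.sum_congr rfl h1, Finset.sum_sub_distrib]
    congr 1
    rw [Finset.sum_ite_mem, Finset.univ_inter, Finset.mul_sum]
  rw [hs]
  ring

private lemma shift_opt (C : ℝ) (hC : ∀ e ∈ E, |a e| ≤ C)
    (p : Fin n → ℝ) (S : Finset (Fin n)) (Δ : ℝ) (hΔ : 0 < Δ)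
    (hcross1 : ∀ e ∈ E, e.1 ∈ S → e.2 ∉ S → C + Δ ≤ p e.1 - p e.2)
    (hcross2 : ∀ e ∈ E, e.1 ∉ S → e.2 ∈ S → C + Δ ≤ p e.2 - p e.1)
    (hmax : ∀ q, objF E a b c s q ≤ objF E a b c s p) :
    ∀ δ : ℝ, |δ| ≤ Δ →
      objF E a b c s (fun i => if i ∈ S then p i - δ else p i) = objF E a b c s p := by
  obtain ⟨K, hK⟩ := shift_eq E a b c s C hC p S Δ hΔ.le hcross1 hcross2
  have e1 := hK Δ (le_of_eq (abs_of_pos hΔ))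
  have e2 := hK (-Δ) (by rw [abs_neg, abs_of_pos hΔ])
  have l1 := hmax (fun i => if i ∈ S then p i - Δ else p i)
  rw [e1] at l1
  have l2 := hmax (fun i => if i ∈ S then p i - (-Δ) else p i)
  rw [e2] at l2
  have h3 : Δ * K = 0 := le_antisymm (by linarith) (by linarith)
  have hK0 : K = 0 := by
    rcases mul_eq_zero.mp h3 with h | h
    · exact absurd h hΔ.ne'
    · exact h
  intro δ hδ
  rw [hK δ hδ, hK0]
  ring

end MCF

private noncomputable def Dset {n : ℕ} (C : ℝ) (p : Fin n → ℝ) : Finset (Fin n) :=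
  @Finset.filter _ (fun i => 0 < p i ∧ ∀ j, p j < p i → p j + C < p i)
    (Classical.decPred _) Finset.univ

private lemma mem_Dset {n : ℕ} {C : ℝ} {p : Fin n → ℝ} {i : Fin n} :
    i ∈ Dset C p ↔ 0 < p i ∧ ∀ j, p j < p i → p j + C < p i := by
  simp [Dset]

private lemma bound_aux {n : ℕ} (C : ℝ) (hC0 : 0 ≤ C) (p : Fin n → ℝ)
    (hD : ∀ i, 0 < p i → ∃ j, p j < p i ∧ p i ≤ p j + C) :
    ∀ m : ℕ, ∀ i : Fin n, ((univ.filter (fun j => p j < p i)).card ≤ m) →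
      p i ≤ (m : ℝ) * C := by
  intro m
  induction m with
  | zero =>
    intro i hcard
    by_contra hlt
    push_neg at hlt
    have h0 : 0 < p i := lt_of_le_of_lt (by simp) hlt
    obtain ⟨j, hj1, _⟩ := hD i h0
    have hjm : j ∈ univ.filter (fun k => p k < p i) := by simp [hj1]
    have := Finset.card_pos.mpr ⟨j, hjm⟩
    omega
  | succ m ih =>
    intro i hcard
    by_cases h0 : 0 < p i
    · obtain ⟨j, hj1, hj2⟩ := hD i h0
      have hsub : univ.filter (fun k => p k < p j) ⊆ univ.filter (fun k => p k < p i) := by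
        intro k hk
        simp only [mem_filter, mem_univ, true_and] at hk ⊢
        exact lt_trans hk hj1
      have hjmem : j ∈ univ.filter (fun k => p k < p i) := by simp [hj1]
      have hjnot : j ∉ univ.filter (fun k => p k < p j) := by simp
      have hlt : (univ.filter (fun k => p k < p j)).card
          < (univ.filter (fun k => p k < p i)).card :=
        Finset.card_lt_card ((Finset.ssubset_iff_of_subset hsub).mpr ⟨j, hjmem, hjnot⟩)
      have hj3 := ih j (by omega)
      push_cast
      linarith
    · push_neg at h0
      have : (0:ℝ) ≤ ((m+1 : ℕ) : ℝ) * C := by positivity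
      linarith

private lemma base_case {n : ℕ} (C : ℝ) (hC0 : 0 ≤ C) (p : Fin n → ℝ)
    (hD : Dset C p = ∅) (hpos : ∀ i, 0 ≤ p i) :
    ∀ i, 0 ≤ p i ∧ p i ≤ ((n - 1 : ℕ) : ℝ) * C := by
  intro i
  refine ⟨hpos i, ?_⟩
  have hD' : ∀ i, 0 < p i → ∃ j, p j < p i ∧ p i ≤ p j + C := by
    intro i hi
    by_contra hcon
    push_neg at hcon
    have : i ∈ Dset C p := mem_Dset.mpr ⟨hi, fun j hj => hcon j hj⟩
    simp [hD] at this
  have hcardle : (univ.filter (fun j => p j < p i)).card ≤ n - 1 := by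
    have hi : i ∉ univ.filter (fun j => p j < p i) := by simp
    have h1 : (univ.filter (fun j => p j < p i)).card < n := by
      have hne : univ.filter (fun j => p j < p i) ≠ univ :=
        fun hall => hi (by rw [hall]; exact mem_univ i)
      have := Finset.card_lt_card (Finset.ssubset_univ_iff.mpr hne)
      simpa using this
    omega
  exact bound_aux C hC0 p hD' (n - 1) i hcardle

private lemma main_aux {n : ℕ} (E : Finset (Fin n × Fin n))
    (a b c : Fin n × Fin n → ℝ) (s : Fin n → ℝ)
    (C : ℝ) (hC : ∀ e ∈ E, |a e| ≤ C) (hC0 : 0 ≤ C) :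
    ∀ N : ℕ, ∀ p : Fin n → ℝ, (Dset C p).card ≤ N → (∀ i, 0 ≤ p i) →
      (∀ q, objF E a b c s q ≤ objF E a b c s p) →
      ∃ pstar : Fin n → ℝ,
        (∀ i, 0 ≤ pstar i ∧ pstar i ≤ ((n - 1 : ℕ) : ℝ) * C) ∧
        (∀ q, objF E a b c s q ≤ objF E a b c s pstar) := by
  intro N
  induction N with
  | zero =>
    intro p hcard hpos hmax
    have hD : Dset C p = ∅ := Finset.card_eq_zero.mp (Nat.le_zero.mp hcard)
    exact ⟨p, base_case C hC0 p hD hpos, hmax⟩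
  | succ N ih =>
    intro p hcard hpos hmax
    by_cases hD : Dset C p = ∅
    · exact ⟨p, base_case C hC0 p hD hpos, hmax⟩
    · obtain ⟨i0, hi0D, hi0min⟩ :=
        Finset.exists_min_image (Dset C p) p (Finset.nonempty_of_ne_empty hD)
      obtain ⟨hτpos, hτgap⟩ := mem_Dset.mp hi0D
      set τ := p i0 with hτdef
      set S : Finset (Fin n) := univ.filter (fun j => τ ≤ p j) with hSdef
      have hmemS : ∀ j, j ∈ S ↔ τ ≤ p j := by
        intro j
        simp [hSdef]
      have hi0S : i0 ∈ S := (hmemS i0).mpr le_rfl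
      by_cases hL : ∃ j, p j < τ
      · -- there are values below τ
        obtain ⟨j0, hj0⟩ := hL
        obtain ⟨jm, hjmL, hjmax⟩ :=
          Finset.exists_max_image (univ.filter (fun j => p j < τ)) p
            ⟨j0, by simp [hj0]⟩
        have hjm : p jm < τ := by simpa using hjmL
        set v := p jm with hvdef
        have hgap : v + C < τ := hτgap jm hjm
        set Δ := τ - v - C with hΔdef
        have hΔpos : 0 < Δ := by
          simp only [hΔdef]
          linarith
        have hnotS : ∀ j, j ∉ S → p j ≤ v := by
          intro j hjS
          have hjτ : p j < τ := by
            by_contra h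
            exact hjS ((hmemS j).mpr (not_lt.mp h))
          exact hjmax j (by simp [hjτ])
        have hcross1 : ∀ e ∈ E, e.1 ∈ S → e.2 ∉ S → C + Δ ≤ p e.1 - p e.2 := by
          intro e _ h1 h2
          have ha := (hmemS e.1).mp h1
          have hb := hnotS e.2 h2
          simp only [hΔdef]
          linarith
        have hcross2 : ∀ e ∈ E, e.1 ∉ S → e.2 ∈ S → C + Δ ≤ p e.2 - p e.1 := by
          intro e _ h1 h2
          have ha := (hmemS e.2).mp h2
          have hb := hnotS e.1 h1
          simp only [hΔdef]
          linarith
        set p' : Fin n → ℝ := fun i => if i ∈ S then p i - Δ else p i with hp'def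
        have hobjeq : objF E a b c s p' = objF E a b c s p :=
          shift_opt E a b c s C hC p S Δ hΔpos hcross1 hcross2 hmax Δ
            (le_of_eq (abs_of_pos hΔpos))
        have hmax' : ∀ q, objF E a b c s q ≤ objF E a b c s p' :=
          fun q => (hmax q).trans_eq hobjeq.symm
        have hv0 : 0 ≤ v := hpos jm
        have hpos' : ∀ i, 0 ≤ p' i := by
          intro i
          simp only [hp'def]
          split_ifs with h
          · have := (hmemS i).mp h
            simp only [hΔdef]
            linarith
          · exact hpos i
        have hp'i0 : p' i0 = v + C := by
          simp only [hp'def, if_pos hi0S, hΔdef]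
          ring
        have hjmS : jm ∉ S := fun h => absurd ((hmemS jm).mp h) (not_le.mpr hjm)
        have hp'jm : p' jm = v := by simp [hp'def, hjmS, hvdef]
        have hi0not : i0 ∉ Dset C p' := by
          intro hmem
          obtain ⟨h1, h2⟩ := mem_Dset.mp hmem
          rcases eq_or_lt_of_le hC0 with hCz | hCpos
          · -- C = 0
            have hv0' : 0 < v := by
              rw [hp'i0] at h1
              linarith
            have hjmD : jm ∈ Dset C p := by
              refine mem_Dset.mpr ⟨hv0', fun k hk => ?_⟩
              rw [← hCz, add_zero]
              exact hk
            have := hi0min jm hjmD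
            rw [← hvdef] at this
            linarith
          · have hlt : p' jm < p' i0 := by
              rw [hp'jm, hp'i0]
              linarith
            have := h2 jm hlt
            rw [hp'jm, hp'i0] at this
            linarith
        have hsubset : Dset C p' ⊆ (Dset C p).erase i0 := by
          intro i hi
          obtain ⟨h1, h2⟩ := mem_Dset.mp hi
          refine Finset.mem_erase.mpr ⟨fun h => hi0not (h ▸ hi), ?_⟩
          by_cases hiS : i ∈ S
          · have hp'i : p' i = p i - Δ := by simp [hp'def, hiS]
            refine mem_Dset.mpr ⟨by rw [hp'i] at h1; linarith, ?_⟩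
            intro j hj
            by_cases hjS : j ∈ S
            · have hp'j : p' j = p j - Δ := by simp [hp'def, hjS]
              have := h2 j (by rw [hp'j, hp'i]; linarith)
              rw [hp'j, hp'i] at this
              linarith
            · have hjv := hnotS j hjS
              have hτle := (hmemS i).mp hiS
              simp only [hΔdef] at *
              linarith
          · have hp'i : p' i = p i := by simp [hp'def, hiS]
            refine mem_Dset.mpr ⟨by rwa [hp'i] at h1, ?_⟩
            intro j hj
            have hiτ : p i < τ := by
              by_contra h
              exact hiS ((hmemS i).mpr (not_lt.mp h))
            have hjS : j ∉ S := by
              intro h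
              have := (hmemS j).mp h
              linarith
            have hp'j : p' j = p j := by simp [hp'def, hjS]
            have := h2 j (by rw [hp'j, hp'i]; exact hj)
            rw [hp'j, hp'i] at this
            exact this
        have hcard' : (Dset C p').card ≤ N := by
          have h1 := Finset.card_le_card hsubset
          have h2 : ((Dset C p).erase i0).card = (Dset C p).card - 1 :=
            Finset.card_erase_of_mem hi0D
          have h3 : 0 < (Dset C p).card := Finset.card_pos.mpr ⟨i0, hi0D⟩
          omega
        exact ih p' hcard' hpos' hmax'
      · -- all values are ≥ τ
        push_neg at hL
        have hSuniv : ∀ j, j ∈ S := fun j => (hmemS j).mpr (hL j)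
        have hcross1 : ∀ e ∈ E, e.1 ∈ S → e.2 ∉ S → C + τ ≤ p e.1 - p e.2 :=
          fun e _ _ h2 => absurd (hSuniv e.2) h2
        have hcross2 : ∀ e ∈ E, e.1 ∉ S → e.2 ∈ S → C + τ ≤ p e.2 - p e.1 :=
          fun e _ h1 _ => absurd (hSuniv e.1) h1
        set p' : Fin n → ℝ := fun i => if i ∈ S then p i - τ else p i with hp'def
        have hobjeq : objF E a b c s p' = objF E a b c s p :=
          shift_opt E a b c s C hC p S τ hτpos hcross1 hcross2 hmax τ
            (le_of_eq (abs_of_pos hτpos))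
        have hmax' : ∀ q, objF E a b c s q ≤ objF E a b c s p' :=
          fun q => (hmax q).trans_eq hobjeq.symm
        have hp'eq : ∀ i, p' i = p i - τ := by
          intro i
          simp [hp'def, hSuniv i]
        have hpos' : ∀ i, 0 ≤ p' i := by
          intro i
          rw [hp'eq i]
          linarith [hL i]
        have hi0not : i0 ∉ Dset C p' := by
          intro hmem
          have h1 := (mem_Dset.mp hmem).1
          rw [hp'eq i0] at h1
          simp only [← hτdef] at h1
          linarith
        have hsubset : Dset C p' ⊆ (Dset C p).erase i0 := by
          intro i hi
          obtain ⟨h1, h2⟩ := mem_Dset.mp hi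
          refine Finset.mem_erase.mpr ⟨fun h => hi0not (h ▸ hi), ?_⟩
          rw [hp'eq i] at h1
          refine mem_Dset.mpr ⟨by linarith, fun j hj => ?_⟩
          have := h2 j (by rw [hp'eq j, hp'eq i]; linarith)
          rw [hp'eq j, hp'eq i] at this
          linarith
        have hcard' : (Dset C p').card ≤ N := by
          have h1 := Finset.card_le_card hsubset
          have h2 : ((Dset C p).erase i0).card = (Dset C p).card - 1 :=
            Finset.card_erase_of_mem hi0D
          have h3 : 0 < (Dset C p).card := Finset.card_pos.mpr ⟨i0, hi0D⟩
          omega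
        exact ih p' hcard' hpos' hmax'

/-- There exists an optimal dual solution `pstar` of the minimum-cost flow dual
satisfying `0 ≤ pstar i ≤ (n−1)·C` for all nodes `i`. -/
theorem exists_bounded_optimal_dual (n : ℕ) (hn : 0 < n)
    (E : Finset (Fin n × Fin n))
    (a b c : Fin n × Fin n → ℝ) (s : Fin n → ℝ) (C : ℝ)
    (hC : ∀ e ∈ E, |a e| ≤ C) (hC0 : 0 ≤ C)
    (hconn : (SimpleGraph.fromRel (fun u v : Fin n => (u, v) ∈ E)).Connected)
    (obj : (Fin n → ℝ) → ℝ)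
    (hobj : ∀ p, obj p =
      (∑ e ∈ E, if 0 ≤ a e - (p e.1 - p e.2)
        then (a e - (p e.1 - p e.2)) * b e
        else (a e - (p e.1 - p e.2)) * c e) + ∑ i, s i * p i)
    (p0 : Fin n → ℝ) (hopt : ∀ p, obj p ≤ obj p0) :
    ∃ pstar : Fin n → ℝ,
      (∀ i, 0 ≤ pstar i ∧ pstar i ≤ (n - 1 : ℕ) * C) ∧
      (∀ p, obj p ≤ obj pstar) := by
  have hobjF : ∀ q, objF E a b c s q = obj q := by
    intro q
    rw [hobj q]
    rfl
  have hmax0 : ∀ q, objF E a b c s q ≤ objF E a b c s p0 := by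
    intro q
    rw [hobjF q, hobjF p0]
    exact hopt q
  have hne : Nonempty (Fin n) := ⟨⟨0, hn⟩⟩
  obtain ⟨i1, _, hmin⟩ := Finset.exists_min_image (univ : Finset (Fin n)) p0 univ_nonempty
  set m := p0 i1 with hmdef
  have hcross1 : ∀ e ∈ E, e.1 ∈ (univ : Finset (Fin n)) → e.2 ∉ (univ : Finset (Fin n)) →
      C + (|m| + 1) ≤ p0 e.1 - p0 e.2 := fun e _ _ h2 => absurd (mem_univ e.2) h2
  have hcross2 : ∀ e ∈ E, e.1 ∉ (univ : Finset (Fin n)) → e.2 ∈ (univ : Finset (Fin n)) →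
      C + (|m| + 1) ≤ p0 e.2 - p0 e.1 := fun e _ h1 _ => absurd (mem_univ e.1) h1
  have habs : (0:ℝ) < |m| + 1 := by positivity
  have hshift := shift_opt E a b c s C hC p0 univ (|m| + 1) habs hcross1 hcross2 hmax0 m
    (by linarith [abs_nonneg m])
  set p1 : Fin n → ℝ := fun i => if i ∈ (univ : Finset (Fin n)) then p0 i - m else p0 i
    with hp1def
  have hmax1 : ∀ q, objF E a b c s q ≤ objF E a b c s p1 :=
    fun q => (hmax0 q).trans_eq hshift.symm
  have hpos1 : ∀ i, 0 ≤ p1 i := by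
    intro i
    simp only [hp1def, if_pos (mem_univ i)]
    linarith [hmin i (mem_univ i)]
  obtain ⟨pstar, hb, ho⟩ :=
    main_aux E a b c s C hC hC0 (Dset C p1).card p1 le_rfl hpos1 hmax1
  refine ⟨pstar, hb, fun q => ?_⟩
  rw [← hobjF q, ← hobjF pstar]
  exact ho q
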